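/- Let p(t) = Σ_{j≥0} β_j t^j be a power series with Σ_j β_j² 2^j ≤ B, and let θ' be a vector in the Euclidean unit ball of ℝ^d. Then there exists v in ℓ² (indexed as in the kernel feature map ψ) with ‖v‖² ≤ B^H such that for all u_{1:H} ∈ (𝔹₂)^H, ⟨v, ψ(u_{1:H})⟩ = ∏_{h=1}^H p(⟨u_h, θ'⟩). -/

import Mathlib

-- list product helpers
lemma list_prod_map_mul {α : Type*} (f g : α → ℝ) (l : List α) :
    (l.map fun a => f a * g a).prod = (l.map f).prod * (l.map g).prod := by
  induction l with
  | nil => simp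
  | cons a t ih => simp [ih]; ring

lemma list_prod_abs {α : Type*} (f : α → ℝ) (l : List α) :
    |(l.map f).prod| = (l.map fun a => |f a|).prod := by
  induction l with
  | nil => simp
  | cons a t ih => simp [abs_mul, ih]

/-- HasSum over lists, decomposed by length. -/
lemma hasSum_list {d : ℕ} (c : ℕ → ℝ) (x : Fin d → ℝ)
    (hc : Summable (fun j => |c j| * (∑ i, |x i|) ^ j)) :
    HasSum (fun l : List (Fin d) => c l.length * (l.map x).prod)
        (∑' j : ℕ, c j * (∑ i, x i) ^ j) ∧
      Summable (fun l : List (Fin d) => |c l.length * (l.map x).prod|) := by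
  set f : (Σ n : ℕ, Fin n → Fin d) → ℝ := fun p => c p.1 * ∏ k, x (p.2 k) with hfdef
  have key : ∀ l : List (Fin d),
      c l.length * (l.map x).prod = f (List.equivSigmaTuple l) := by
    intro l
    simp only [hfdef, List.equivSigmaTuple_apply_fst, List.equivSigmaTuple_apply_snd]
    rw [← List.ofFn_getElem_eq_map, List.prod_ofFn]; rfl
  have fiber : ∀ n : ℕ, (∑' q : Fin n → Fin d, |f ⟨n, q⟩|) = |c n| * (∑ i, |x i|) ^ n := by
    intro n
    rw [tsum_fintype, Fintype.sum_pow, Finset.mul_sum]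
    refine Finset.sum_congr rfl fun q _ => ?_
    rw [abs_mul, Finset.abs_prod]
  have habs : Summable (fun p => |f p|) := by
    refine (summable_sigma_of_nonneg (fun p => abs_nonneg _)).2
      ⟨fun n => (hasSum_fintype _).summable, ?_⟩
    simpa only [fiber] using hc
  have hsum : Summable f := habs.of_abs
  have htsum : (∑' p, f p) = ∑' j : ℕ, c j * (∑ i, x i) ^ j := by
    rw [Summable.tsum_sigma' (fun n => (hasSum_fintype _).summable) hsum]
    refine tsum_congr fun n => ?_
    rw [tsum_fintype, Fintype.sum_pow, Finset.mul_sum]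
  constructor
  · have h := hsum.hasSum
    rw [htsum] at h
    have h2 := (List.equivSigmaTuple (α := Fin d)).hasSum_iff.2 h
    exact h2.congr_fun fun l => (key l).symm ▸ rfl
  · have h2 := (List.equivSigmaTuple (α := Fin d)).summable_iff.2 habs
    refine h2.congr fun l => ?_
    simp only [Function.comp_apply]
    rw [key l]

/-- HasSum of a product of functions over a pi type. -/
lemma hasSum_pi_prod {X : Type*} :
    ∀ (n : ℕ) (g : Fin n → X → ℝ), (∀ h, Summable fun x => |g h x|) →
      HasSum (fun ℓ : Fin n → X => ∏ h, g h (ℓ h)) (∏ h, ∑' x, g h x) := by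
  intro n
  induction n with
  | zero =>
      intro g hg
      have h1 : HasSum (fun ℓ : Fin 0 → X => ∏ h, g h (ℓ h))
          ((fun ℓ : Fin 0 → X => ∏ h, g h (ℓ h)) default) :=
        hasSum_single default (fun b' hb' => absurd (Subsingleton.elim b' default) hb')
      simpa using h1
  | succ n ih =>
      intro g hg
      have h0 : Summable (g 0) := (hg 0).of_abs
      have hF := ih (fun h x => g h.succ x) (fun h => hg h.succ)
      have hFabs := ih (fun h x => |g h.succ x|) (fun h => by simpa [abs_abs] using hg h.succ)
      have hnormF : Summable (fun f : Fin n → X => ‖∏ h, g h.succ (f h)‖) := by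
        refine hFabs.summable.congr fun f => ?_
        rw [Real.norm_eq_abs, Finset.abs_prod]
      have hnorm0 : Summable fun x => ‖g 0 x‖ := by
        simpa [Real.norm_eq_abs] using hg 0
      have hmul : Summable (fun p : X × (Fin n → X) => g 0 p.1 * ∏ h, g h.succ (p.2 h)) := by
        apply summable_mul_of_summable_norm hnorm0 hnormF
      have hprod : HasSum (fun p : X × (Fin n → X) => g 0 p.1 * ∏ h, g h.succ (p.2 h))
          ((∑' x, g 0 x) * ∏ h : Fin n, ∑' x, g (Fin.succ h) x) := by
        apply HasSum.mul h0.hasSum hF hmul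
      have e := Fin.consEquiv (fun _ : Fin (n + 1) => X)
      rw [← (Fin.consEquiv (fun _ : Fin (n + 1) => X)).hasSum_iff]
      have heq : ((fun ℓ : Fin (n + 1) → X => ∏ h, g h (ℓ h)) ∘
          (Fin.consEquiv (fun _ : Fin (n + 1) => X))) =
          fun p : X × (Fin n → X) => g 0 p.1 * ∏ h, g h.succ (p.2 h) := by
        funext p
        simp only [Function.comp_apply, Fin.consEquiv_apply]
        rw [Fin.prod_univ_succ]
        simp
      rw [heq, Fin.prod_univ_succ]
      exact hprod

lemma list_prod_const' {α : Type*} (c : ℝ) (l : List α) :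
    (l.map fun _ => c).prod = c ^ l.length := by
  induction l with
  | nil => simp
  | cons a t ih => simp [ih, pow_succ, mul_comm]

lemma list_prod_sq {α : Type*} (f : α → ℝ) (l : List α) :
    ((l.map f).prod) ^ 2 = (l.map fun a => f a ^ 2).prod := by
  induction l with
  | nil => simp
  | cons a t ih => simp [mul_pow, ih]

lemma summable_abs_mul_pow (β : ℕ → ℝ) (hsum : Summable fun j => β j ^ 2 * 2 ^ j)
    {t : ℝ} (ht0 : 0 ≤ t) (ht1 : t ≤ 1) : Summable fun j => |β j| * t ^ j := by
  set C := ∑' j, β j ^ 2 * 2 ^ j with hC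
  have hC0 : 0 ≤ C := tsum_nonneg fun j => by positivity
  set r : ℝ := Real.sqrt (1 / 2) with hr
  have hr0 : 0 ≤ r := Real.sqrt_nonneg _
  have hr1 : r < 1 := by
    rw [hr, show (1:ℝ) = Real.sqrt 1 by simp]
    exact Real.sqrt_lt_sqrt (by norm_num) (by norm_num)
  have hrj : ∀ j : ℕ, Real.sqrt ((1 / 2 : ℝ) ^ j) = r ^ j := by
    intro j
    have h1 : ((1:ℝ) / 2) ^ j = (r ^ j) ^ 2 := by
      rw [← pow_mul, mul_comm j 2, pow_mul, hr,
        Real.sq_sqrt (by norm_num : (0:ℝ) ≤ 1 / 2)]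
    rw [h1, Real.sqrt_sq (pow_nonneg hr0 j)]
  have hb : ∀ j, |β j| ≤ Real.sqrt C * r ^ j := by
    intro j
    have h1 : β j ^ 2 * 2 ^ j ≤ C := Summable.le_tsum hsum j fun i _ => by positivity
    have h2 : β j ^ 2 ≤ C * (1 / 2) ^ j := by
      have h3 := mul_le_mul_of_nonneg_right h1 (by positivity : (0:ℝ) ≤ (1 / 2) ^ j)
      calc β j ^ 2 = β j ^ 2 * 2 ^ j * (1 / 2) ^ j := by
            rw [mul_assoc, ← mul_pow]; norm_num
        _ ≤ C * (1 / 2) ^ j := h3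
    calc |β j| = Real.sqrt (β j ^ 2) := (Real.sqrt_sq_eq_abs _).symm
      _ ≤ Real.sqrt (C * (1 / 2) ^ j) := Real.sqrt_le_sqrt h2
      _ = Real.sqrt C * r ^ j := by rw [Real.sqrt_mul hC0, hrj]
  have hgeo : Summable fun j : ℕ => Real.sqrt C * r ^ j :=
    (summable_geometric_of_lt_one hr0 hr1).mul_left _
  refine Summable.of_nonneg_of_le (fun j => by positivity) (fun j => ?_) hgeo
  calc |β j| * t ^ j ≤ (Real.sqrt C * r ^ j) * 1 :=
        mul_le_mul (hb j) (pow_le_one₀ ht0 ht1) (by positivity) (by positivity)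
    _ = Real.sqrt C * r ^ j := mul_one _

/-- The feature map `ψ`: at index `ℓ = (i₁,…,i_H)` (a tuple of finite index-sequences over
`[d]`), its entry is `∏_h 2^{−|i_h|/2} ∏_k u_{h, i_{h,k}}`. -/
noncomputable def psiMap {d H : ℕ} (u : Fin H → EuclideanSpace ℝ (Fin d))
    (ℓ : Fin H → List (Fin d)) : ℝ :=
  ∏ h, (Real.sqrt 2)⁻¹ ^ (ℓ h).length * ((ℓ h).map (u h)).prod

/-- Products of power series of inner products are realized by bounded vectors in the RKHS:
if `p(t) = Σ_j β_j t^j` with `Σ_j β_j² 2^j ≤ B` and `‖θ'‖ ≤ 1`, there exists `v` with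
`‖v‖² ≤ B^H` such that `⟨v, ψ(u_{1:H})⟩ = ∏_h p(⟨u_h, θ'⟩)` for all unit-ball tuples. -/
theorem power_series_product_in_rkhs (d H : ℕ) (hH : 0 < H) (β : ℕ → ℝ) (B : ℝ)
    (hsum : Summable (fun j => β j ^ 2 * 2 ^ j))
    (hB : (∑' j, β j ^ 2 * 2 ^ j) ≤ B)
    (θ' : EuclideanSpace ℝ (Fin d)) (hθ : ‖θ'‖ ≤ 1) :
    ∃ v : (Fin H → List (Fin d)) → ℝ,
      (∑' ℓ, v ℓ ^ 2) ≤ B ^ H ∧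
      ∀ (u : Fin H → EuclideanSpace ℝ (Fin d)), (∀ h, ‖u h‖ ≤ 1) →
        (∑' ℓ, v ℓ * psiMap u ℓ) =
          ∏ h, ∑' (j : ℕ), β j * (inner ℝ (u h) θ' : ℝ) ^ j := by
  classical
  have hB0 : 0 ≤ B := le_trans (tsum_nonneg fun j => by positivity) hB
  have normsq : ∀ w : EuclideanSpace ℝ (Fin d), (∑ i, w i ^ 2) = ‖w‖ ^ 2 := by
    intro w
    have h1 : ‖w‖ ^ 2 = ∑ i, ‖w i‖ ^ 2 := by
      rw [EuclideanSpace.norm_eq, Real.sq_sqrt (by positivity)]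
    rw [h1]
    exact Finset.sum_congr rfl fun i _ => by rw [Real.norm_eq_abs, sq_abs]
  have hθsq : (∑ i, θ' i ^ 2) ≤ 1 := by
    rw [normsq]
    nlinarith [norm_nonneg θ']
  -- the squared summand
  have hx2sum : (∑ i, (2 * θ' i ^ 2)) ≤ 2 := by
    rw [← Finset.mul_sum]; nlinarith [hθsq]
  have hx2nonneg : (0:ℝ) ≤ ∑ i, (2 * θ' i ^ 2) :=
    Finset.sum_nonneg fun i _ => by positivity
  have hcx2 : Summable fun j => |β j ^ 2| * (∑ i, |2 * θ' i ^ 2|) ^ j := by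
    refine hsum.of_nonneg_of_le (fun j => by positivity) (fun j => ?_)
    have h1 : |β j ^ 2| = β j ^ 2 := abs_of_nonneg (by positivity)
    have h2 : (∑ i, |2 * θ' i ^ 2|) = ∑ i, (2 * θ' i ^ 2) :=
      Finset.sum_congr rfl fun i _ => abs_of_nonneg (by positivity)
    rw [h1, h2]
    exact mul_le_mul_of_nonneg_left (pow_le_pow_left₀ hx2nonneg hx2sum j) (by positivity)
  obtain ⟨hs2, habs2⟩ := hasSum_list (c := fun j => β j ^ 2) (x := fun i => 2 * θ' i ^ 2) hcx2
  set S : ℝ := ∑' j : ℕ, β j ^ 2 * (∑ i, (2 * θ' i ^ 2)) ^ j with hSdef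
  have hS0 : 0 ≤ S := tsum_nonneg fun j => by positivity
  have hSB : S ≤ B := by
    refine le_trans (Summable.tsum_le_tsum (fun j => ?_) ?_ hsum) hB
    · exact mul_le_mul_of_nonneg_left (pow_le_pow_left₀ hx2nonneg hx2sum j) (by positivity)
    · refine hcx2.congr fun j => ?_
      rw [abs_of_nonneg (by positivity : (0:ℝ) ≤ β j ^ 2)]
      congr 1
      congr 1
      exact Finset.sum_congr rfl fun i _ => abs_of_nonneg (by positivity)
  refine ⟨fun ℓ => ∏ h, (β (ℓ h).length * Real.sqrt 2 ^ (ℓ h).length *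
      ((ℓ h).map θ').prod), ?_, ?_⟩
  · -- norm bound
    have hv2 : ∀ ℓ : Fin H → List (Fin d),
        (∏ h, (β (ℓ h).length * Real.sqrt 2 ^ (ℓ h).length * ((ℓ h).map θ').prod)) ^ 2
          = ∏ h, (β (ℓ h).length ^ 2 * ((ℓ h).map fun i => 2 * θ' i ^ 2).prod) := by
      intro ℓ
      rw [← Finset.prod_pow]
      refine Finset.prod_congr rfl fun h _ => ?_
      have e1 : (β (ℓ h).length * Real.sqrt 2 ^ (ℓ h).length * ((ℓ h).map θ').prod) ^ 2
          = β (ℓ h).length ^ 2 * ((Real.sqrt 2 ^ 2) ^ (ℓ h).length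
            * (((ℓ h).map θ').prod) ^ 2) := by ring
      rw [e1, Real.sq_sqrt (by norm_num : (0:ℝ) ≤ 2), list_prod_sq]
      congr 1
      rw [list_prod_map_mul (fun _ : Fin d => (2:ℝ)) (fun i => θ' i ^ 2) (ℓ h),
        list_prod_const']
    have hL1 := hasSum_pi_prod H
      (fun _ : Fin H => fun l : List (Fin d) => β l.length ^ 2 *
        (l.map fun i => 2 * θ' i ^ 2).prod) (fun _ => habs2)
    simp only [] at hL1
    have hval : (∑' l : List (Fin d), β l.length ^ 2 *
        (l.map fun i => 2 * θ' i ^ 2).prod) = S := hs2.tsum_eq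
    rw [hval] at hL1
    have htv : (∑' ℓ : Fin H → List (Fin d),
        (∏ h, (β (ℓ h).length * Real.sqrt 2 ^ (ℓ h).length * ((ℓ h).map θ').prod)) ^ 2)
        = S ^ H := by
      rw [tsum_congr hv2, hL1.tsum_eq, Finset.prod_const, Finset.card_univ, Fintype.card_fin]
    rw [htv]
    exact pow_le_pow_left₀ hS0 hSB H
  · -- identity
    intro u hu
    have husq : ∀ h, (∑ i, (u h) i ^ 2) ≤ 1 := by
      intro h
      rw [normsq]
      nlinarith [norm_nonneg (u h), hu h]
    have hCS : ∀ h : Fin H, (∑ i, |(u h) i * θ' i|) ≤ 1 := by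
      intro h
      set a : EuclideanSpace ℝ (Fin d) := WithLp.toLp 2 (fun i => |(u h) i|) with ha
      set b : EuclideanSpace ℝ (Fin d) := WithLp.toLp 2 (fun i => |θ' i|) with hbdef
      have hab : (∑ i, |(u h) i * θ' i|) = (inner ℝ a b : ℝ) := by
        rw [PiLp.inner_apply]
        refine Finset.sum_congr rfl fun i _ => ?_
        simp [ha, hbdef, abs_mul, RCLike.inner_apply, mul_comm]
      have hna : ‖a‖ = ‖u h‖ := by
        rw [EuclideanSpace.norm_eq, EuclideanSpace.norm_eq]
        congr 1
        exact Finset.sum_congr rfl fun i _ => by simp [ha, Real.norm_eq_abs, abs_abs]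
      have hnb : ‖b‖ = ‖θ'‖ := by
        rw [EuclideanSpace.norm_eq, EuclideanSpace.norm_eq]
        congr 1
        exact Finset.sum_congr rfl fun i _ => by simp [hbdef, Real.norm_eq_abs, abs_abs]
      calc (∑ i, |(u h) i * θ' i|) = (inner ℝ a b : ℝ) := hab
        _ ≤ ‖a‖ * ‖b‖ := real_inner_le_norm a b
        _ = ‖u h‖ * ‖θ'‖ := by rw [hna, hnb]
        _ ≤ 1 * 1 := mul_le_mul (hu h) hθ (norm_nonneg _) zero_le_one
        _ = 1 := mul_one _
    have hgl : ∀ h : Fin H,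
        HasSum (fun l : List (Fin d) => β l.length * (l.map fun i => (u h) i * θ' i).prod)
          (∑' j : ℕ, β j * (∑ i, (u h) i * θ' i) ^ j) ∧
        Summable (fun l : List (Fin d) =>
          |β l.length * (l.map fun i => (u h) i * θ' i).prod|) := by
      intro h
      apply hasSum_list
      exact summable_abs_mul_pow β hsum
        (Finset.sum_nonneg fun i _ => abs_nonneg _) (hCS h)
    have hL1 := hasSum_pi_prod H
      (fun h : Fin H => fun l : List (Fin d) =>
        β l.length * (l.map fun i => (u h) i * θ' i).prod) (fun h => (hgl h).2)
    simp only [] at hL1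
    have hpt : ∀ ℓ : Fin H → List (Fin d),
        (∏ h, (β (ℓ h).length * Real.sqrt 2 ^ (ℓ h).length * ((ℓ h).map θ').prod))
          * psiMap u ℓ
        = ∏ h, (β (ℓ h).length * ((ℓ h).map fun i => (u h) i * θ' i).prod) := by
      intro ℓ
      rw [psiMap, ← Finset.prod_mul_distrib]
      refine Finset.prod_congr rfl fun h _ => ?_
      have hne : Real.sqrt 2 ≠ 0 := by positivity
      have e2 : Real.sqrt 2 ^ (ℓ h).length * ((Real.sqrt 2)⁻¹) ^ (ℓ h).length = 1 := by
        rw [← mul_pow, mul_inv_cancel₀ hne, one_pow]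
      calc (β (ℓ h).length * Real.sqrt 2 ^ (ℓ h).length * ((ℓ h).map θ').prod)
            * ((Real.sqrt 2)⁻¹ ^ (ℓ h).length * ((ℓ h).map (u h)).prod)
          = (Real.sqrt 2 ^ (ℓ h).length * ((Real.sqrt 2)⁻¹) ^ (ℓ h).length)
            * (β (ℓ h).length * (((ℓ h).map (u h)).prod * ((ℓ h).map θ').prod)) := by ring
        _ = β (ℓ h).length * (((ℓ h).map (u h)).prod * ((ℓ h).map θ').prod) := by
            rw [e2, one_mul]
        _ = β (ℓ h).length * ((ℓ h).map fun i => (u h) i * θ' i).prod := by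
            rw [list_prod_map_mul]
    have hinner : ∀ h : Fin H, (inner ℝ (u h) θ' : ℝ) = ∑ i, (u h) i * θ' i := by
      intro h
      rw [PiLp.inner_apply]
      exact Finset.sum_congr rfl fun i _ => by simp [RCLike.inner_apply, mul_comm]
    rw [tsum_congr hpt, hL1.tsum_eq]
    refine Finset.prod_congr rfl fun h _ => ?_
    rw [(hgl h).1.tsum_eq, hinner h]
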